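/- For all integers 0 ≤ j ≤ n and all x ∈ [0,1], one has ∑_{k=j}^n (C(k,j)/C(n,j))·B_{k,n}(x,q) = ∑_{k=0}^j q^{C(k,2)}·binom_q(x,k)·[k]_q!·s_q(j,k), where binom_q(x,k) = (∏_{i=0}^{k−1} [x−i]_q)/[k]_q! is the Gaussian binomial coefficient with real upper argument x, [k]_q! = ∏_{i=1}^k [i]_q, and s_q(j,k) = (q^{−C(k,2)}/[k]_q!)·∑_{i=0}^k (−1)^i·q^{C(i,2)}·binom_q(k,i)·[k−i]_q^j is the q-Stirling number of the second kind. -/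

import Mathlib

/-- The q-number `[x]_q = (1 - q^x)/(1 - q)` for real `x`. -/
noncomputable def qNum (q x : ℝ) : ℝ := (1 - q ^ x) / (1 - q)

/-- The q-Bernstein polynomial `B_{k,n}(x,q) = C(n,k)·[x]_q^k·[1-x]_{1/q}^{n-k}`. -/
noncomputable def qBernstein (q : ℝ) (k n : ℕ) (x : ℝ) : ℝ :=
  (n.choose k : ℝ) * qNum q x ^ k * qNum q⁻¹ (1 - x) ^ (n - k)

/-- The q-factorial `[k]_q! = ∏_{i=1}^k [i]_q`. -/
noncomputable def qFact (q : ℝ) (k : ℕ) : ℝ := ∏ i ∈ Finset.Icc 1 k, qNum q (i : ℝ)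

/-- The Gaussian binomial coefficient with real upper argument:
`binom_q(a,k) = (∏_{i=0}^{k−1} [a−i]_q)/[k]_q!`. -/
noncomputable def qBinom (q a : ℝ) (k : ℕ) : ℝ :=
  (∏ i ∈ Finset.range k, qNum q (a - (i : ℝ))) / qFact q k

/-- The q-Stirling numbers of the second kind:
`s_q(n,k) = (q^{−C(k,2)}/[k]_q!)·∑_{j=0}^k (−1)^j·q^{C(j,2)}·binom_q(k,j)·[k−j]_q^n`. -/
noncomputable def qStirling (q : ℝ) (n k : ℕ) : ℝ :=
  ((q ^ (k.choose 2))⁻¹ / qFact q k) *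
    ∑ j ∈ Finset.range (k + 1),
      (-1 : ℝ) ^ j * q ^ (j.choose 2) * qBinom q (k : ℝ) j * qNum q ((k : ℝ) - (j : ℝ)) ^ n

noncomputable def qN (q : ℝ) (k : ℕ) : ℝ := (1 - q ^ k) / (1 - q)

noncomputable def qF (q : ℝ) (k : ℕ) : ℝ := ∏ i ∈ Finset.range k, qN q (i + 1)

noncomputable def qGb (q : ℝ) : ℕ → ℕ → ℝ
  | _, 0 => 1
  | 0, _ + 1 => 0
  | n + 1, i + 1 => q ^ (i + 1) * qGb q n (i + 1) + qGb q n i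

variable {q : ℝ}

lemma qN_zero : qN q 0 = 0 := by simp [qN]

lemma qN_pos (hq : 0 < q) (hq1 : q < 1) (k : ℕ) : 0 < qN q (k + 1) := by
  have h1 : q ^ (k+1) < 1 := pow_lt_one₀ hq.le hq1 (Nat.succ_ne_zero k)
  exact div_pos (by linarith) (by linarith)

lemma qF_succ (k : ℕ) : qF q (k + 1) = qF q k * qN q (k + 1) :=
  Finset.prod_range_succ _ _

lemma qF_zero : qF q 0 = 1 := by simp [qF]

lemma qF_pos (hq : 0 < q) (hq1 : q < 1) (k : ℕ) : 0 < qF q k :=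
  Finset.prod_pos (fun i _ => qN_pos hq hq1 i)

lemma qF_ne (hq : 0 < q) (hq1 : q < 1) (k : ℕ) : qF q k ≠ 0 := (qF_pos hq hq1 k).ne'

lemma qGb_zero_right : ∀ m, qGb q m 0 = 1
  | 0 => rfl
  | _ + 1 => rfl

lemma qGb_eq_zero : ∀ n i, n < i → qGb q n i = 0
  | _, 0, h => absurd h (Nat.not_lt_zero _)
  | 0, i + 1, _ => rfl
  | n + 1, i + 1, h => by
    have h1 : n < i + 1 := by omega
    have h2 : n < i := by omega
    show q ^ (i + 1) * qGb q n (i + 1) + qGb q n i = 0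
    rw [qGb_eq_zero n (i+1) h1, qGb_eq_zero n i h2]; ring

lemma qN_split (hq1 : q < 1) {i n : ℕ} (h : i ≤ n) :
    qN q (n + 1) = q ^ (i + 1) * qN q (n - i) + qN q (i + 1) := by
  have key : q ^ (i + 1) * q ^ (n - i) = q ^ (n + 1) := by
    rw [← pow_add]; congr 1; omega
  have h1 : 1 - q ≠ 0 := by linarith
  unfold qN
  field_simp
  linear_combination key

lemma qGb_mul (hq : 0 < q) (hq1 : q < 1) :
    ∀ n i, i ≤ n → qF q i * qF q (n - i) * qGb q n i = qF q n := by
  intro n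
  induction n with
  | zero => intro i h; interval_cases i; simp [qF_zero, qGb_zero_right]
  | succ n IH =>
    intro i h
    match i, h with
    | 0, _ => simp [qF_zero, qGb_zero_right]
    | i + 1, h =>
      have hin : i ≤ n := by omega
      show qF q (i+1) * qF q (n + 1 - (i+1)) * (q ^ (i + 1) * qGb q n (i + 1) + qGb q n i) = _
      rw [show n + 1 - (i+1) = n - i from by omega]
      rcases Nat.lt_or_ge i n with hlt | hge
      · have IH1 := IH (i + 1) hlt
        have IH2 := IH i hin
        have h1 : qF q (n - i) = qF q (n - (i+1)) * qN q (n - i) := by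
          rw [show n - i = n - (i+1) + 1 from by omega, qF_succ,
            show n - (i+1) + 1 = n - i from by omega]
        have h2 : qF q (i+1) = qF q i * qN q (i+1) := qF_succ _
        have h3 : qF q (n+1) = qF q n * qN q (n+1) := qF_succ _
        have h4 := qN_split hq1 hin
        rw [h1] at IH2 ⊢
        rw [h2] at IH1 ⊢
        rw [h3, h4]
        linear_combination (q^(i+1) * qN q (n-i)) * IH1 + qN q (i+1) * IH2
      · have hie : i = n := le_antisymm hin hge
        subst hie
        have IH2 := IH i le_rfl
        rw [Nat.sub_self, qF_zero] at IH2 ⊢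
        have hGd : qGb q i i = 1 :=
          mul_left_cancel₀ (qF_ne hq hq1 i) (by rw [mul_one]; linarith [IH2])
        rw [qGb_eq_zero i (i+1) (Nat.lt_succ_self i), hGd, qF_succ]
        ring

lemma choose_two_succ (i : ℕ) : (i + 1).choose 2 = i.choose 2 + i := by
  rw [Nat.choose_succ_succ]
  simp [Nat.choose_one_right, Nat.add_comm]

lemma gauss (n : ℕ) :
    ∑ i ∈ Finset.range (n + 2), (-1 : ℝ) ^ i * q ^ (i.choose 2) * qGb q (n + 1) i = 0 := by
  rw [Finset.sum_range_succ' _ (n+1)]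
  have hg0 : (-1:ℝ)^0 * q^(Nat.choose 0 2) * qGb q (n+1) 0 = 1 := by
    simp [qGb_zero_right]
  rw [hg0]
  set f : ℕ → ℝ := fun i => (-1)^i * q^(i.choose 2 + i) * qGb q n i with hf
  have hterm : ∀ i, (-1:ℝ)^(i+1) * q^((i+1).choose 2) * qGb q (n+1) (i+1) = f (i+1) - f i := by
    intro i
    show (-1:ℝ)^(i+1) * q^((i+1).choose 2) * (q^(i+1)*qGb q n (i+1) + qGb q n i) = _
    simp only [hf]
    rw [choose_two_succ]
    simp only [pow_add, pow_succ]
    ring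
  have htel : ∑ i ∈ Finset.range (n+1), ((-1:ℝ)^(i+1) * q^((i+1).choose 2) * qGb q (n+1) (i+1))
      = f (n+1) - f 0 := by
    simp only [hterm]
    exact Finset.sum_range_sub f (n+1)
  rw [htel, hf]
  simp only
  rw [qGb_eq_zero n (n+1) (Nat.lt_succ_self n), qGb_zero_right]
  simp

-- ===== layer 2 =====

noncomputable def qNum' (q x : ℝ) : ℝ := (1 - q ^ x) / (1 - q)

lemma qNum'_nat (k : ℕ) : qNum' q (k : ℝ) = qN q k := by
  rw [qNum', qN, Real.rpow_natCast]

lemma qNum'_sub_nat {l k : ℕ} (h : l ≤ k) : qNum' q ((k:ℝ) - (l:ℝ)) = qN q (k - l) := by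
  rw [show ((k:ℝ) - (l:ℝ)) = (((k - l : ℕ)):ℝ) from by push_cast [Nat.cast_sub h]; ring,
    qNum'_nat]

lemma qN_sub (hq1 : q < 1) {i m : ℕ} (h : i ≤ m) :
    qN q (m - i) = qN q m - q ^ (m - i) * qN q i := by
  have key : q ^ (m - i) * q ^ i = q ^ m := by rw [← pow_add]; congr 1; omega
  have h1 : 1 - q ≠ 0 := by linarith
  unfold qN
  field_simp
  linear_combination -key

lemma absorb (hq : 0 < q) (hq1 : q < 1) (k i : ℕ) :
    qN q (i+1) * qGb q (k+1) (i+1) = qN q (k+1) * qGb q k i := by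
  rcases Nat.lt_or_ge k i with hik | hik
  · rw [qGb_eq_zero (k+1) (i+1) (by omega), qGb_eq_zero k i hik]; ring
  · have h1 := qGb_mul hq hq1 (k+1) (i+1) (by omega)
    rw [show k + 1 - (i+1) = k - i from by omega, qF_succ i, qF_succ k] at h1
    have h2 := qGb_mul hq hq1 k i hik
    have key : (qF q i * qF q (k-i)) * (qN q (i+1) * qGb q (k+1) (i+1))
        = (qF q i * qF q (k-i)) * (qN q (k+1) * qGb q k i) := by
      linear_combination h1 - qN q (k+1) * h2
    exact mul_left_cancel₀ (mul_ne_zero (qF_ne hq hq1 i) (qF_ne hq hq1 (k-i))) key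

/-- raw q-Stirling sum -/
noncomputable def qT (q : ℝ) (j k : ℕ) : ℝ :=
  ∑ i ∈ Finset.range (k + 1), (-1:ℝ)^i * q ^ (i.choose 2) * qGb q k i * qN q (k - i) ^ j

lemma qT_rec (hq : 0 < q) (hq1 : q < 1) (j k : ℕ) :
    qT q (j+1) (k+1) = qN q (k+1) * qT q j (k+1) + q^k * qN q (k+1) * qT q j k := by
  have step1 : qT q (j+1) (k+1) = qN q (k+1) * qT q j (k+1)
      - ∑ i ∈ Finset.range (k+2),
          (-1:ℝ)^i * q ^ (i.choose 2) * qGb q (k+1) i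
            * (q ^ (k+1-i) * qN q i) * qN q (k+1-i) ^ j := by
    unfold qT
    rw [Finset.mul_sum, ← Finset.sum_sub_distrib]
    apply Finset.sum_congr rfl
    intro i hi
    have hik : i ≤ k + 1 := by
      have := Finset.mem_range.mp hi; omega
    have hsub := qN_sub hq1 hik
    rw [pow_succ, hsub]
    ring
  have step2 : ∑ i ∈ Finset.range (k+2),
      (-1:ℝ)^i * q ^ (i.choose 2) * qGb q (k+1) i
        * (q ^ (k+1-i) * qN q i) * qN q (k+1-i) ^ j
      = - (q^k * qN q (k+1) * qT q j k) := by
    rw [Finset.sum_range_succ' _ (k+1)]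
    have hzero : (-1:ℝ)^0 * q ^ (Nat.choose 0 2) * qGb q (k+1) 0
        * (q ^ (k+1-0) * qN q 0) * qN q (k+1-0) ^ j = 0 := by
      rw [qN_zero]; ring
    rw [hzero, add_zero]
    unfold qT
    rw [Finset.mul_sum, ← Finset.sum_neg_distrib]
    apply Finset.sum_congr rfl
    intro i hi
    have hik : i ≤ k := by have := Finset.mem_range.mp hi; omega
    have habs := absorb hq hq1 k i
    have hpow : q ^ i * q ^ (k - i) = q ^ k := by rw [← pow_add]; congr 1; omega
    rw [show k + 1 - (i+1) = k - i from by omega, choose_two_succ, pow_add]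
    linear_combination ((-1:ℝ)^(i+1) * q^(i.choose 2) * q^i * q^(k-i) * qN q (k-i)^j) * habs
      + ((-1:ℝ)^(i+1) * q^(i.choose 2) * qN q (k+1) * qGb q k i * qN q (k-i)^j) * hpow
  rw [step1, step2]
  ring

lemma qT_vanish (hq : 0 < q) (hq1 : q < 1) : ∀ j k, j < k → qT q j k = 0 := by
  intro j
  induction j with
  | zero =>
    intro k hk
    match k, hk with
    | m + 1, _ =>
      have : qT q 0 (m+1)
          = ∑ i ∈ Finset.range (m + 2), (-1:ℝ)^i * q ^ (i.choose 2) * qGb q (m+1) i := by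
        unfold qT
        apply Finset.sum_congr rfl
        intros; rw [pow_zero, mul_one]
      rw [this]; exact gauss m
  | succ j IH =>
    intro k hk
    match k, hk with
    | m + 1, hk =>
      rw [qT_rec hq hq1, IH (m+1) (by omega), IH m (by omega)]
      ring

/-- divided-difference coefficients -/
noncomputable def dd (q : ℝ) (j k : ℕ) : ℝ := ((q ^ (k.choose 2))⁻¹ / qF q k) * qT q j k

lemma dd_vanish (hq : 0 < q) (hq1 : q < 1) {j k : ℕ} (h : j < k) : dd q j k = 0 := by
  rw [dd, qT_vanish hq hq1 j k h, mul_zero]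

lemma dd_zero_succ (j : ℕ) : dd q (j+1) 0 = 0 := by
  rw [dd, qT]
  rw [Finset.sum_range_one]
  rw [qN_zero, zero_pow (Nat.succ_ne_zero j)]
  ring

lemma dd_zero_zero : dd q 0 0 = 1 := by
  rw [dd, qT, Finset.sum_range_one, qF_zero]
  norm_num [qGb_zero_right]

lemma dd_rec (hq : 0 < q) (hq1 : q < 1) (j k : ℕ) :
    dd q (j+1) (k+1) = dd q j k + qN q (k+1) * dd q j (k+1) := by
  unfold dd
  rw [qT_rec hq hq1, qF_succ, choose_two_succ, pow_add]
  have h1 : q ^ (k.choose 2) ≠ 0 := pow_ne_zero _ hq.ne'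
  have h2 : q ^ k ≠ 0 := pow_ne_zero _ hq.ne'
  have h3 := qF_ne hq hq1 k
  have h4 := (qN_pos hq hq1 k).ne'
  field_simp
  ring

lemma newton (hq : 0 < q) (hq1 : q < 1) (j : ℕ) (t : ℝ) :
    ∑ k ∈ Finset.range (j+1), dd q j k * ∏ i ∈ Finset.range k, (t - qN q i) = t ^ j := by
  induction j with
  | zero => simp [dd_zero_zero]
  | succ j IH =>
    rw [Finset.sum_range_succ' _ (j+1)]
    rw [dd_zero_succ]
    have hrec : ∀ k, dd q (j+1) (k+1) * ∏ i ∈ Finset.range (k+1), (t - qN q i)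
        = dd q j k * ((t - qN q k) * ∏ i ∈ Finset.range k, (t - qN q i))
          + (qN q (k+1) * dd q j (k+1) * ∏ i ∈ Finset.range (k+1), (t - qN q i)) := by
      intro k
      rw [dd_rec hq hq1, Finset.prod_range_succ]
      ring
    simp only [hrec]
    rw [Finset.sum_add_distrib]
    have hshift : ∑ k ∈ Finset.range (j+1),
        (qN q (k+1) * dd q j (k+1) * ∏ i ∈ Finset.range (k+1), (t - qN q i))
        = ∑ k ∈ Finset.range (j+1),
        (qN q k * dd q j k * ∏ i ∈ Finset.range k, (t - qN q i)) := by
      set g : ℕ → ℝ := fun k => qN q k * dd q j k * ∏ i ∈ Finset.range k, (t - qN q i) with hg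
      have h2 := Finset.sum_range_succ' g (j+1)
      have h3 := Finset.sum_range_succ g (j+1)
      have hg0 : g 0 = 0 := by simp [hg, qN_zero]
      have hgj : g (j+1) = 0 := by
        simp only [hg]
        rw [dd_vanish hq hq1 (Nat.lt_succ_self j)]
        ring
      rw [hg0, add_zero] at h2
      rw [hgj, add_zero] at h3
      calc ∑ k ∈ Finset.range (j+1),
            (qN q (k+1) * dd q j (k+1) * ∏ i ∈ Finset.range (k+1), (t - qN q i))
          = ∑ k ∈ Finset.range (j+1), g (k+1) := rfl
        _ = ∑ k ∈ Finset.range (j+2), g k := h2.symm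
        _ = ∑ k ∈ Finset.range (j+1), g k := h3
        _ = _ := rfl
    rw [hshift, zero_mul, add_zero, ← Finset.sum_add_distrib]
    have hmerge : ∀ k, dd q j k * ((t - qN q k) * ∏ i ∈ Finset.range k, (t - qN q i))
        + qN q k * dd q j k * ∏ i ∈ Finset.range k, (t - qN q i)
        = t * (dd q j k * ∏ i ∈ Finset.range k, (t - qN q i)) := by intro k; ring
    simp only [hmerge]
    rw [← Finset.mul_sum, IH, pow_succ]
    ring

-- ===== bridges to the actual definitions =====

lemma qNum_nat (k : ℕ) : qNum q (k : ℝ) = qN q k := by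
  rw [qNum, qN, Real.rpow_natCast]

lemma qNum_sub_nat {l k : ℕ} (h : l ≤ k) : qNum q ((k:ℝ) - (l:ℝ)) = qN q (k - l) := by
  rw [show ((k:ℝ) - (l:ℝ)) = (((k - l : ℕ)):ℝ) from by push_cast [Nat.cast_sub h]; ring,
    qNum_nat]

lemma qFact_eq (k : ℕ) : qFact q k = qF q k := by
  induction k with
  | zero => simp [qFact, qF]
  | succ k IH =>
    rw [qFact, Finset.prod_Icc_succ_top (Nat.succ_le_succ (Nat.zero_le k)), ← qFact, IH,
      qF_succ, qNum_nat]

lemma prod_qN (q : ℝ) : ∀ i k : ℕ, i ≤ k →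
    qF q (k - i) * ∏ l ∈ Finset.range i, qN q (k - l) = qF q k := by
  intro i
  induction i with
  | zero => intro k _; simp
  | succ i IH =>
    intro k h
    rw [Finset.prod_range_succ, show k - (i+1) = k - i - 1 from by omega]
    have e : k - i = (k - i - 1) + 1 := by omega
    have : qF q (k - i) = qF q (k - i - 1) * qN q (k - i) := by
      rw [e, qF_succ, ← e]
    calc qF q (k - i - 1) * ((∏ l ∈ Finset.range i, qN q (k - l)) * qN q (k - i))
        = qF q (k - i) * ∏ l ∈ Finset.range i, qN q (k - l) := by rw [this]; ring
      _ = qF q k := IH k (by omega)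

lemma qBinom_nat (hq : 0 < q) (hq1 : q < 1) {i k : ℕ} (h : i ≤ k) :
    qBinom q (k : ℝ) i = qGb q k i := by
  rw [qBinom, qFact_eq]
  have hprod : ∏ l ∈ Finset.range i, qNum q ((k:ℝ) - (l:ℝ))
      = ∏ l ∈ Finset.range i, qN q (k - l) := by
    apply Finset.prod_congr rfl
    intro l hl
    exact qNum_sub_nat (by have := Finset.mem_range.mp hl; omega)
  rw [hprod, div_eq_iff (qF_ne hq hq1 i)]
  have h1 := prod_qN q i k h
  have h2 := qGb_mul hq hq1 k i h
  apply mul_left_cancel₀ (qF_ne hq hq1 (k - i))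
  linear_combination h1 - h2

lemma qStirling_eq_dd (hq : 0 < q) (hq1 : q < 1) (j k : ℕ) :
    qStirling q j k = dd q j k := by
  rw [qStirling, dd, qT, qFact_eq]
  congr 1
  apply Finset.sum_congr rfl
  intro i hi
  have hik : i ≤ k := by have := Finset.mem_range.mp hi; omega
  rw [qBinom_nat hq hq1 hik, qNum_sub_nat hik]

lemma qnum_shift (hq : 0 < q) (hq1 : q < 1) (x : ℝ) (i : ℕ) :
    q ^ i * qNum q (x - (i:ℝ)) = qNum q x - qN q i := by
  unfold qNum qN
  rw [Real.rpow_sub hq, Real.rpow_natCast]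
  have h1 : (1:ℝ) - q ≠ 0 := by linarith
  have h2 : q ^ i ≠ 0 := pow_ne_zero _ hq.ne'
  field_simp
  ring

lemma rhs_term (hq : 0 < q) (hq1 : q < 1) (x : ℝ) (k : ℕ) :
    q ^ (k.choose 2) * qBinom q x k * qFact q k
      = ∏ i ∈ Finset.range k, (qNum q x - qN q i) := by
  have hfe : qFact q k ≠ 0 := by rw [qFact_eq]; exact qF_ne hq hq1 k
  rw [qBinom, mul_assoc, div_mul_cancel₀ _ hfe]
  have hpow : q ^ (k.choose 2) = ∏ i ∈ Finset.range k, q ^ i := by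
    rw [Finset.prod_pow_eq_pow_sum]
    congr 1
    rw [Finset.sum_range_id, Nat.choose_two_right]
  rw [hpow, ← Finset.prod_mul_distrib]
  apply Finset.prod_congr rfl
  intro i _
  exact qnum_shift hq hq1 x i

-- ===== the Bernstein side =====

lemma qNum_inv (hq : 0 < q) (hq1 : q < 1) (x : ℝ) :
    qNum q⁻¹ (1 - x) = 1 - qNum q x := by
  unfold qNum
  rw [Real.inv_rpow hq.le, Real.rpow_sub hq, Real.rpow_one]
  have h1 : (1:ℝ) - q ≠ 0 := by linarith
  have h2 : q⁻¹ ≠ 1 := by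
    rw [ne_eq, inv_eq_one]; exact hq1.ne
  have h3 : (1:ℝ) - q⁻¹ ≠ 0 := sub_ne_zero.2 (Ne.symm h2)
  have h4 : q ^ x ≠ 0 := (Real.rpow_pos_of_pos hq x).ne'
  have h5 : q - 1 ≠ 0 := fun hc => h1 (by linarith)
  have h6 : q ≠ 0 := hq.ne'
  rw [show (1:ℝ) - q⁻¹ = (q - 1)/q from by field_simp]
  field_simp
  ring

lemma bern_sum {n j : ℕ} (hj : j ≤ n) (t : ℝ) :
    ∑ k ∈ Finset.Icc j n, ((k.choose j : ℝ) / (n.choose j : ℝ))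
        * ((n.choose k : ℝ) * t ^ k * (1 - t) ^ (n - k)) = t ^ j := by
  have hnj : (n.choose j : ℝ) ≠ 0 :=
    Nat.cast_ne_zero.2 (Nat.choose_pos hj).ne'
  have step1 : ∀ k ∈ Finset.Icc j n,
      ((k.choose j : ℝ) / (n.choose j : ℝ)) * ((n.choose k : ℝ) * t ^ k * (1 - t) ^ (n - k))
        = ((n - j).choose (k - j) : ℝ) * (t ^ k * (1 - t) ^ (n - k)) := by
    intro k hk
    obtain ⟨hk1, hk2⟩ := Finset.mem_Icc.mp hk
    have hc : (n.choose k : ℝ) * (k.choose j : ℝ)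
        = (n.choose j : ℝ) * ((n - j).choose (k - j) : ℝ) := by
      exact_mod_cast congrArg (Nat.cast (R := ℝ)) (Nat.choose_mul (n := n) hk1)
    field_simp
    linear_combination (t ^ k * (1 - t) ^ (n - k)) * hc
  rw [Finset.sum_congr rfl step1]
  rw [← Finset.Ico_add_one_right_eq_Icc, Finset.sum_Ico_eq_sum_range]
  rw [show n + 1 - j = (n - j) + 1 from by omega]
  have step2 : ∀ m ∈ Finset.range ((n - j) + 1),
      ((n - j).choose ((j + m) - j) : ℝ) * (t ^ (j + m) * (1 - t) ^ (n - (j + m)))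
        = t ^ j * (t ^ m * (1 - t) ^ ((n - j) - m) * ((n - j).choose m : ℝ)) := by
    intro m _
    rw [show (j + m) - j = m from by omega, show n - (j + m) = (n - j) - m from by omega,
      pow_add]
    ring
  rw [Finset.sum_congr rfl step2, ← Finset.mul_sum, ← add_pow t (1 - t) (n - j)]
  norm_num


/-- `∑_{k=j}^n (C(k,j)/C(n,j))·B_{k,n}(x,q)
  = ∑_{k=0}^j q^{C(k,2)}·binom_q(x,k)·[k]_q!·s_q(j,k)`. -/
theorem qBernstein_qStirling (q : ℝ) (hq : 0 < q) (hq1 : q < 1)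
    (n j : ℕ) (hj : j ≤ n) (x : ℝ) (hx : x ∈ Set.Icc (0 : ℝ) 1) :
    ∑ k ∈ Finset.Icc j n, ((k.choose j : ℝ) / (n.choose j : ℝ)) * qBernstein q k n x
      = ∑ k ∈ Finset.range (j + 1),
          q ^ (k.choose 2) * qBinom q x k * qFact q k * qStirling q j k := by
  have hL : ∑ k ∈ Finset.Icc j n, ((k.choose j : ℝ) / (n.choose j : ℝ)) * qBernstein q k n x
      = qNum q x ^ j := by
    have : ∀ k, qBernstein q k n x
        = (n.choose k : ℝ) * qNum q x ^ k * (1 - qNum q x) ^ (n - k) := by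
      intro k; rw [qBernstein, qNum_inv hq hq1]
    simp only [this]
    exact bern_sum hj (qNum q x)
  have hR : ∑ k ∈ Finset.range (j + 1),
      q ^ (k.choose 2) * qBinom q x k * qFact q k * qStirling q j k = qNum q x ^ j := by
    have hterm : ∀ k, q ^ (k.choose 2) * qBinom q x k * qFact q k * qStirling q j k
        = dd q j k * ∏ i ∈ Finset.range k, (qNum q x - qN q i) := by
      intro k
      rw [rhs_term hq hq1 x k, qStirling_eq_dd hq hq1, mul_comm]
    simp only [hterm]
    exact newton hq hq1 j (qNum q x)
  rw [hL, hR]
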